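/- Let X be a real Banach space, (I, ≤) a nonempty directed set, and (X_i)_{i ∈ I} a family of closed subspaces of X such that X_i ⊆ X_j whenever i ≤ j, each X_i is one-complemented in X (i.e., there exists a bounded linear projection P_i : X → X with range X_i and ‖P_i‖ = 1), and the union ⋃_{i ∈ I} X_i is dense in X. Then n_L(X) ≥ limsup_{i ∈ I} n_L(X_i), where the upper limit is taken along the directed set I. -/
import Mathlib

open scoped NNReal

noncomputable section

/-- The Lipschitz norm of a map between normed spaces. -/
def LipNorm {X Y : Type*} [NormedAddCommGroup X] [NormedAddCommGroup Y] (T : X → Y) : ℝ :=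
  sSup {r : ℝ | ∃ x y : X, x ≠ y ∧ r = ‖T x - T y‖ / ‖x - y‖}

/-- `T ∈ Lip₀(X,Y)`: Lipschitz and vanishing at 0. -/
def IsLip0 {X Y : Type*} [NormedAddCommGroup X] [NormedAddCommGroup Y] (T : X → Y) : Prop :=
  (∃ K, LipschitzWith K T) ∧ T 0 = 0

/-- `D(x)`: functionals with `f x = ‖f‖ ‖x‖ = ‖x‖²`. -/
def Dset (𝕜 : Type*) {X : Type*} [RCLike 𝕜] [NormedAddCommGroup X] [NormedSpace 𝕜 X]
    (x : X) : Set (X →L[𝕜] 𝕜) :=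
  {f | f x = ((‖x‖ ^ 2 : ℝ) : 𝕜) ∧ ‖f‖ * ‖x‖ = ‖x‖ ^ 2}

/-- The Lipschitz numerical radius. -/
def nuL (𝕜 : Type*) {X : Type*} [RCLike 𝕜] [NormedAddCommGroup X] [NormedSpace 𝕜 X]
    (T : X → X) : ℝ :=
  sSup {r : ℝ | ∃ (x y : X) (f : X →L[𝕜] 𝕜), x ≠ y ∧ f ∈ Dset 𝕜 (x - y) ∧
    r = ‖f (T x - T y)‖ / ‖x - y‖ ^ 2}

/-- The Lipschitz numerical index. -/
def nL (𝕜 X : Type*) [RCLike 𝕜] [NormedAddCommGroup X] [NormedSpace 𝕜 X] : ℝ :=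
  sInf {r : ℝ | ∃ T : X → X, IsLip0 T ∧ LipNorm T = 1 ∧ r = nuL 𝕜 T}

section MyAux

variable {Z W : Type*} [NormedAddCommGroup Z] [NormedAddCommGroup W]

def lipSet (T : Z → W) : Set ℝ := {r : ℝ | ∃ x y : Z, x ≠ y ∧ r = ‖T x - T y‖ / ‖x - y‖}

lemma lipNorm_eq (T : Z → W) : LipNorm T = sSup (lipSet T) := rfl

lemma lipSet_nonneg {T : Z → W} {r : ℝ} (hr : r ∈ lipSet T) : 0 ≤ r := by
  obtain ⟨x, y, -, rfl⟩ := hr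
  positivity

lemma lipNorm_nonneg (T : Z → W) : 0 ≤ LipNorm T :=
  Real.sSup_nonneg fun _ h => lipSet_nonneg h

lemma lipSet_bddAbove {T : Z → W} {K : ℝ≥0} (hK : LipschitzWith K T) :
    BddAbove (lipSet T) := by
  refine ⟨K, fun r hr => ?_⟩
  obtain ⟨x, y, hxy, rfl⟩ := hr
  have hxy' : (0:ℝ) < ‖x - y‖ := by
    rw [norm_pos_iff, sub_ne_zero]; exact hxy
  rw [div_le_iff₀ hxy']
  have := hK.dist_le_mul x y
  rwa [dist_eq_norm, dist_eq_norm] at this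

lemma mem_lipSet_le {T : Z → W} {K : ℝ≥0} (hK : LipschitzWith K T) {x y : Z} (hxy : x ≠ y) :
    ‖T x - T y‖ / ‖x - y‖ ≤ LipNorm T :=
  le_csSup (lipSet_bddAbove hK) ⟨x, y, hxy, rfl⟩

lemma norm_sub_le_of_lipNorm {T : Z → W} {K : ℝ≥0} (hK : LipschitzWith K T)
    (hL : LipNorm T ≤ 1) (x y : Z) : ‖T x - T y‖ ≤ ‖x - y‖ := by
  rcases eq_or_ne x y with rfl | hxy
  · simp
  have hxy' : (0:ℝ) < ‖x - y‖ := by rw [norm_pos_iff, sub_ne_zero]; exact hxy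
  have := (mem_lipSet_le hK hxy).trans hL
  rw [div_le_one hxy'] at this
  linarith

/-- sSup of a nonneg-scaled image. -/
lemma csSup_image_mul {c : ℝ} (hc : 0 < c) {s : Set ℝ} (hs : s.Nonempty) (hb : BddAbove s) :
    sSup ((fun r => c * r) '' s) = c * sSup s := by
  refine IsLUB.csSup_eq ⟨?_, ?_⟩ (hs.image _)
  · rintro r ⟨r0, hr0, rfl⟩
    exact mul_le_mul_of_nonneg_left (le_csSup hb hr0) hc.le
  · intro b hb'
    have : ∀ r0 ∈ s, r0 ≤ c⁻¹ * b := by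
      intro r0 hr0
      have : c * r0 ≤ b := hb' ⟨r0, hr0, rfl⟩
      rw [le_inv_mul_iff₀ hc]
      linarith
    have := csSup_le hs this
    calc c * sSup s ≤ c * (c⁻¹ * b) := mul_le_mul_of_nonneg_left this hc.le
    _ = b := by field_simp

lemma lipSet_smul {c : ℝ} (hc : 0 ≤ c) (T : Z → W) [NormedSpace ℝ W] :
    lipSet (fun z => c • T z) = (fun r => c * r) '' lipSet T := by
  ext r
  constructor
  · rintro ⟨x, y, hxy, rfl⟩
    refine ⟨‖T x - T y‖ / ‖x - y‖, ⟨x, y, hxy, rfl⟩, ?_⟩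
    rw [← smul_sub, norm_smul, Real.norm_eq_abs, abs_of_nonneg hc, mul_div_assoc]
  · rintro ⟨r0, ⟨x, y, hxy, rfl⟩, rfl⟩
    refine ⟨x, y, hxy, ?_⟩
    rw [← smul_sub, norm_smul, Real.norm_eq_abs, abs_of_nonneg hc, mul_div_assoc]

lemma lipNorm_smul {c : ℝ} (hc : 0 < c) (T : Z → W) [NormedSpace ℝ W]
    (hs : (lipSet T).Nonempty) (hb : BddAbove (lipSet T)) :
    LipNorm (fun z => c • T z) = c * LipNorm T := by
  rw [lipNorm_eq, lipSet_smul hc.le, csSup_image_mul hc hs hb, lipNorm_eq]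

end MyAux

section MyAux2

variable {Z : Type*} [NormedAddCommGroup Z] [NormedSpace ℝ Z]

def nuLSet (T : Z → Z) : Set ℝ :=
  {r : ℝ | ∃ (x y : Z) (f : Z →L[ℝ] ℝ), x ≠ y ∧ f ∈ Dset ℝ (x - y) ∧
    r = ‖f (T x - T y)‖ / ‖x - y‖ ^ 2}

lemma nuL_eq (T : Z → Z) : nuL ℝ T = sSup (nuLSet T) := rfl

lemma nuL_nonneg (T : Z → Z) : 0 ≤ nuL ℝ T := by
  refine Real.sSup_nonneg ?_
  rintro r ⟨x, y, f, hxy, hf, rfl⟩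
  positivity

lemma Dset_norm_eq {x : Z} (hx : x ≠ 0) {f : Z →L[ℝ] ℝ} (hf : f ∈ Dset ℝ x) :
    ‖f‖ = ‖x‖ := by
  have hx' : (0:ℝ) < ‖x‖ := norm_pos_iff.mpr hx
  have := hf.2
  rw [pow_two] at this
  exact mul_right_cancel₀ hx'.ne' this

lemma nuLSet_bddAbove {T : Z → Z} {K : ℝ≥0} (hK : LipschitzWith K T) :
    BddAbove (nuLSet T) := by
  refine ⟨K, fun r hr => ?_⟩
  obtain ⟨x, y, f, hxy, hf, rfl⟩ := hr
  have hxy0 : x - y ≠ 0 := sub_ne_zero.mpr hxy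
  have hxy' : (0:ℝ) < ‖x - y‖ := norm_pos_iff.mpr hxy0
  have hfn : ‖f‖ = ‖x - y‖ := Dset_norm_eq hxy0 hf
  have h1 : ‖f (T x - T y)‖ ≤ ‖f‖ * ‖T x - T y‖ := f.le_opNorm _
  have h2 : ‖T x - T y‖ ≤ K * ‖x - y‖ := by
    have := hK.dist_le_mul x y
    rwa [dist_eq_norm, dist_eq_norm] at this
  rw [div_le_iff₀ (by positivity)]
  calc ‖f (T x - T y)‖ ≤ ‖x - y‖ * (K * ‖x - y‖) := by
        rw [← hfn]; exact h1.trans (by rw [hfn]; exact mul_le_mul_of_nonneg_left h2 hxy'.le)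
  _ = K * ‖x - y‖ ^ 2 := by ring

lemma nuL_smul_le {c : ℝ} (hc : 0 ≤ c) {T : Z → Z} (hb : BddAbove (nuLSet T)) :
    nuL ℝ (fun z => c • T z) ≤ c * nuL ℝ T := by
  refine Real.sSup_le ?_ (mul_nonneg hc (nuL_nonneg T))
  rintro r ⟨x, y, f, hxy, hf, rfl⟩
  have : f (c • T x - c • T y) = c * f (T x - T y) := by
    rw [← smul_sub, map_smul, smul_eq_mul]
  rw [this, Real.norm_eq_abs, abs_mul, abs_of_nonneg hc, ← Real.norm_eq_abs, mul_div_assoc]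
  exact mul_le_mul_of_nonneg_left (le_csSup hb ⟨x, y, f, hxy, hf, rfl⟩) hc

lemma nL_set_bddBelow (Z : Type*) [NormedAddCommGroup Z] [NormedSpace ℝ Z] :
    BddBelow {r : ℝ | ∃ T : Z → Z, IsLip0 T ∧ LipNorm T = 1 ∧ r = nuL ℝ T} := by
  refine ⟨0, fun r hr => ?_⟩
  obtain ⟨T, -, -, rfl⟩ := hr
  exact nuL_nonneg T

lemma nL_nonneg (Z : Type*) [NormedAddCommGroup Z] [NormedSpace ℝ Z] : 0 ≤ nL ℝ Z := by
  refine Real.sInf_nonneg ?_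
  rintro r ⟨T, -, -, rfl⟩
  exact nuL_nonneg T

lemma nL_le {T : Z → Z} (h0 : IsLip0 T) (h1 : LipNorm T = 1) : nL ℝ Z ≤ nuL ℝ T :=
  csInf_le (nL_set_bddBelow Z) ⟨T, h0, h1, rfl⟩

end MyAux2

section Proj

variable {X : Type*} [NormedAddCommGroup X] [NormedSpace ℝ X]

lemma nuL_comp_proj_le (M : Submodule ℝ X) (P : X →L[ℝ] X)
    (hPle : ∀ z : X, ‖P z‖ ≤ ‖z‖) (hmem : ∀ z : X, P z ∈ M) (hfix : ∀ z ∈ M, P z = z)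
    (T : X → X) (hbdd : BddAbove (nuLSet T)) :
    nuL ℝ (fun v : M => (⟨P (T v), hmem _⟩ : M)) ≤ nuL ℝ T := by
  refine Real.sSup_le ?_ (nuL_nonneg T)
  rintro r ⟨u, v, f, huv, hf, rfl⟩
  set Q : X →L[ℝ] M := P.codRestrict M hmem with hQ
  set g : X →L[ℝ] ℝ := f.comp Q with hg
  have hcuv : (u : X) ≠ (v : X) := fun h => huv (Subtype.coe_injective h)
  have huv0 : u - v ≠ 0 := sub_ne_zero.mpr huv
  have hnuv : ‖u - v‖ = ‖(u : X) - (v : X)‖ := by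
    rw [Submodule.coe_norm]; norm_cast
  have hnpos : (0:ℝ) < ‖u - v‖ := norm_pos_iff.mpr huv0
  have hQuv : Q ((u : X) - (v : X)) = u - v := by
    apply Subtype.ext
    simp [hQ, hfix _ u.2, hfix _ v.2]
  have hQle : ∀ z : X, ‖Q z‖ ≤ ‖z‖ := by
    intro z
    rw [Submodule.coe_norm]
    exact hPle z
  have hfn : ‖f‖ = ‖u - v‖ := Dset_norm_eq huv0 hf
  have hguv : g ((u : X) - (v : X)) = ‖u - v‖ ^ 2 := by
    have h1 := hf.1
    simp only [RCLike.ofReal_real_eq_id, id_eq] at h1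
    simp [hg, hQuv, h1]
  have hgnorm : ‖g‖ = ‖(u : X) - (v : X)‖ := by
    have hle : ‖g‖ ≤ ‖(u : X) - (v : X)‖ := by
      refine ContinuousLinearMap.opNorm_le_bound _ (by positivity) ?_
      intro z
      calc ‖g z‖ ≤ ‖f‖ * ‖Q z‖ := f.le_opNorm _
      _ ≤ ‖f‖ * ‖z‖ := mul_le_mul_of_nonneg_left (hQle z) (norm_nonneg f)
      _ = ‖(u : X) - (v : X)‖ * ‖z‖ := by rw [hfn, hnuv]
    have hge : ‖(u : X) - (v : X)‖ ≤ ‖g‖ := by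
      have h1 : ‖u - v‖ ^ 2 = ‖g ((u : X) - (v : X))‖ := by
        rw [hguv, Real.norm_eq_abs, abs_of_nonneg (by positivity)]
      have h2 : ‖g ((u : X) - (v : X))‖ ≤ ‖g‖ * ‖(u : X) - (v : X)‖ := g.le_opNorm _
      rw [← hnuv] at h2
      rw [pow_two] at h1
      nlinarith [norm_nonneg g]
    linarith
  have hgD : g ∈ Dset ℝ ((u : X) - (v : X)) := by
    constructor
    · simp only [RCLike.ofReal_real_eq_id, id_eq]
      rw [hguv, hnuv]
    · rw [hgnorm, pow_two]
  have hgT : g (T (u : X) - T (v : X)) =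
      f ((⟨P (T (u:X)), hmem _⟩ : M) - (⟨P (T (v:X)), hmem _⟩ : M)) := by
    have : Q (T (u : X) - T (v : X)) =
        (⟨P (T (u:X)), hmem _⟩ : M) - (⟨P (T (v:X)), hmem _⟩ : M) := by
      apply Subtype.ext
      simp [hQ]
    simp [hg, this]
  have : ‖f ((⟨P (T (u:X)), hmem _⟩ : M) - (⟨P (T (v:X)), hmem _⟩ : M))‖ / ‖u - v‖ ^ 2
      = ‖g (T (u : X) - T (v : X))‖ / ‖(u : X) - (v : X)‖ ^ 2 := by
    rw [hgT, hnuv]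
  rw [this]
  exact le_csSup hbdd ⟨(u : X), (v : X), g, hcuv, hgD, rfl⟩

end Proj

section Triv
lemma nL_of_trivial (Z : Type*) [NormedAddCommGroup Z] [NormedSpace ℝ Z]
    (h : ∀ a b : Z, a = b) : nL ℝ Z = 0 := by
  have hset : {r : ℝ | ∃ T : Z → Z, IsLip0 T ∧ LipNorm T = 1 ∧ r = nuL ℝ T} = ∅ := by
    ext r
    simp only [Set.mem_setOf_eq, Set.mem_empty_iff_false, iff_false, not_exists]
    rintro T ⟨-, hL, -⟩
    have hempty : lipSet T = ∅ := by
      ext s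
      simp only [Set.mem_empty_iff_false, iff_false]
      rintro ⟨x, y, hxy, -⟩
      exact hxy (h x y)
    rw [lipNorm_eq, hempty, Real.sSup_empty] at hL
    exact absurd hL.symm one_ne_zero
  rw [nL, hset, Real.sInf_empty]
end Triv

set_option maxHeartbeats 1000000

/-- If `(X_i)_{i ∈ I}` is an increasing family (over a directed index set)
of closed one-complemented subspaces of `X` whose union is dense in `X`, then
`n_L(X) ≥ limsup_i n_L(X_i)`. -/
theorem lipschitz_index_ge_limsup_of_one_complemented
    {X : Type*} [NormedAddCommGroup X] [NormedSpace ℝ X] [CompleteSpace X]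
    {I : Type*} [Nonempty I] [Preorder I] [IsDirected I (· ≤ ·)]
    (Xi : I → Submodule ℝ X)
    (hmono : ∀ i j : I, i ≤ j → Xi i ≤ Xi j)
    (hclosed : ∀ i, IsClosed (Xi i : Set X))
    (hproj : ∀ i, ∃ P : X →L[ℝ] X, ‖P‖ = 1 ∧ (∀ x : X, P x ∈ Xi i) ∧ ∀ x ∈ Xi i, P x = x)
    (hdense : Dense (⋃ i, (Xi i : Set X))) :
    Filter.limsup (fun i => nL ℝ (Xi i)) Filter.atTop ≤ nL ℝ X := by
  have hNe : (Filter.atTop : Filter I).NeBot := Filter.atTop_neBot_iff.mpr ⟨‹_›, ‹_›⟩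
  by_cases hX : ∃ x0 : X, x0 ≠ 0
  swap
  · push_neg at hX
    have h1 : nL ℝ X = 0 := nL_of_trivial _ fun a b => by rw [hX a, hX b]
    have h2 : (fun i => nL ℝ (Xi i)) = fun _ => (0:ℝ) := by
      funext i
      exact nL_of_trivial _ fun a b => Subtype.ext (by rw [hX (a:X), hX (b:X)])
    rw [h1, h2, Filter.limsup_const]
  obtain ⟨x0, hx0⟩ := hX
  -- the identity map witnesses nonemptiness of the defining set of `nL ℝ X`
  have hlipid : lipSet (id : X → X) = {1} := by
    ext r
    simp only [Set.mem_singleton_iff]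
    constructor
    · rintro ⟨x, y, hxy, rfl⟩
      have h : (0:ℝ) < ‖x - y‖ := norm_pos_iff.mpr (sub_ne_zero.mpr hxy)
      simp [div_self h.ne']
    · rintro rfl
      refine ⟨x0, 0, hx0, ?_⟩
      have h : (0:ℝ) < ‖x0‖ := norm_pos_iff.mpr hx0
      simp [div_self h.ne']
  have hid : LipNorm (id : X → X) = 1 := by
    rw [lipNorm_eq, hlipid, csSup_singleton]
  have hne : {r : ℝ | ∃ T : X → X, IsLip0 T ∧ LipNorm T = 1 ∧ r = nuL ℝ T}.Nonempty :=
    ⟨nuL ℝ (id : X → X), id, ⟨⟨1, LipschitzWith.id⟩, rfl⟩, hid, rfl⟩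
  refine le_csInf hne ?_
  rintro r ⟨T, ⟨⟨K, hK⟩, hT0⟩, hL1, rfl⟩
  have hT1 : ∀ a b : X, ‖T a - T b‖ ≤ ‖a - b‖ := norm_sub_le_of_lipNorm hK hL1.le
  have hnuT : 0 ≤ nuL ℝ T := nuL_nonneg T
  have hbddT : BddAbove (nuLSet T) := nuLSet_bddAbove hK
  refine le_of_forall_pos_le_add ?_
  intro δ hδ
  set ε : ℝ := δ / (nuL ℝ T + 2*δ) with hε
  have hεpos : 0 < ε := by positivity
  have hεlt : ε < 1 := by
    rw [hε, div_lt_one (by linarith)]; linarith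
  have h1ε : 0 < 1 - ε := by linarith
  have key : ∀ᶠ j in (Filter.atTop : Filter I), nL ℝ (Xi j) ≤ (1-ε)⁻¹ * nuL ℝ T := by
    -- pick a pair almost attaining the Lipschitz norm of T
    have hlipTne : (lipSet T).Nonempty := ⟨_, x0, 0, hx0, rfl⟩
    obtain ⟨r0, hr0mem, hr0lt⟩ : ∃ r0 ∈ lipSet T, 1 - ε/4 < r0 := by
      apply exists_lt_of_lt_csSup hlipTne
      rw [← lipNorm_eq, hL1]; linarith
    obtain ⟨x, y, hxy, rfl⟩ := hr0mem
    have hd : (0:ℝ) < ‖x - y‖ := norm_pos_iff.mpr (sub_ne_zero.mpr hxy)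
    set d := ‖x - y‖ with hdd
    have hTxy : (1 - ε/4) * d < ‖T x - T y‖ := by
      rw [lt_div_iff₀ hd] at hr0lt; exact hr0lt
    set δ0 : ℝ := ε * d / 32 with hδ0
    have hδ0pos : 0 < δ0 := by positivity
    -- density approximations
    have hball := Metric.dense_iff.mp hdense
    obtain ⟨x', hx'b, hx'U⟩ := hball x δ0 hδ0pos
    obtain ⟨y', hy'b, hy'U⟩ := hball y δ0 hδ0pos
    obtain ⟨w1, hw1b, hw1U⟩ := hball (T x') δ0 hδ0pos
    obtain ⟨w2, hw2b, hw2U⟩ := hball (T y') δ0 hδ0pos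
    obtain ⟨i₁, hx'mem⟩ := Set.mem_iUnion.mp hx'U
    obtain ⟨i₂, hy'mem⟩ := Set.mem_iUnion.mp hy'U
    obtain ⟨k₁, hw1mem⟩ := Set.mem_iUnion.mp hw1U
    obtain ⟨k₂, hw2mem⟩ := Set.mem_iUnion.mp hw2U
    have hxx' : ‖x - x'‖ < δ0 := by
      rw [← dist_eq_norm, dist_comm]; exact Metric.mem_ball.mp hx'b
    have hyy' : ‖y - y'‖ < δ0 := by
      rw [← dist_eq_norm, dist_comm]; exact Metric.mem_ball.mp hy'b
    have hw1n : ‖T x' - w1‖ < δ0 := by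
      rw [← dist_eq_norm, dist_comm]; exact Metric.mem_ball.mp hw1b
    have hw2n : ‖T y' - w2‖ < δ0 := by
      rw [← dist_eq_norm, dist_comm]; exact Metric.mem_ball.mp hw2b
    obtain ⟨a1, ha11, ha12⟩ := directed_of (· ≤ ·) i₁ i₂
    obtain ⟨a2, ha21, ha22⟩ := directed_of (· ≤ ·) k₁ k₂
    obtain ⟨j1, hj11, hj12⟩ := directed_of (· ≤ ·) a1 a2
    refine Filter.eventually_atTop.mpr ⟨j1, fun j hj => ?_⟩
    have hx'j : x' ∈ Xi j := hmono i₁ j (ha11.trans (hj11.trans hj)) hx'mem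
    have hy'j : y' ∈ Xi j := hmono i₂ j (ha12.trans (hj11.trans hj)) hy'mem
    have hw1j : w1 ∈ Xi j := hmono k₁ j (ha21.trans (hj12.trans hj)) hw1mem
    have hw2j : w2 ∈ Xi j := hmono k₂ j (ha22.trans (hj12.trans hj)) hw2mem
    obtain ⟨P, hPn, hPmem, hPfix⟩ := hproj j
    have hPle : ∀ z : X, ‖P z‖ ≤ ‖z‖ := fun z => by
      calc ‖P z‖ ≤ ‖P‖ * ‖z‖ := P.le_opNorm z
      _ = ‖z‖ := by rw [hPn, one_mul]
    set S : Xi j → Xi j := fun v => (⟨P (T v), hPmem _⟩ : Xi j) with hS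
    -- numerator estimate
    have hABle : ‖(T x' - T y') - (w1 - w2)‖ ≤ ‖T x' - w1‖ + ‖T y' - w2‖ := by
      have heq : (T x' - T y') - (w1 - w2) = (T x' - w1) - (T y' - w2) := by abel
      rw [heq]; exact norm_sub_le _ _
    have hB : ‖T x' - T y'‖ - ‖(T x' - T y') - (w1 - w2)‖ ≤ ‖w1 - w2‖ := by
      have h8 := norm_sub_norm_le (T x' - T y') ((T x' - T y') - (w1 - w2))
      have heq2 : (T x' - T y') - ((T x' - T y') - (w1 - w2)) = w1 - w2 := by abel
      rw [heq2] at h8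
      linarith
    have hPA : ‖T x' - T y'‖ - 2 * ‖(T x' - T y') - (w1 - w2)‖ ≤ ‖P (T x') - P (T y')‖ := by
      have h4 : ‖w1 - w2‖ - ‖P (T x') - P (T y')‖ ≤ ‖(w1 - w2) - (P (T x') - P (T y'))‖ :=
        norm_sub_norm_le _ _
      have h5 : (w1 - w2) - (P (T x') - P (T y')) = -(P ((T x' - T y') - (w1 - w2))) := by
        simp only [map_sub, hPfix w1 hw1j, hPfix w2 hw2j]
        abel
      rw [h5, norm_neg] at h4
      have h6 : ‖P ((T x' - T y') - (w1 - w2))‖ ≤ ‖(T x' - T y') - (w1 - w2)‖ := hPle _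
      linarith [hB]
    have htri : ‖T x - T y‖ ≤ ‖T x - T x'‖ + ‖T x' - T y'‖ + ‖T y' - T y‖ := by
      have := dist_triangle4 (T x) (T x') (T y') (T y)
      simpa [dist_eq_norm] using this
    have hTx' : ‖T x - T x'‖ ≤ ‖x - x'‖ := hT1 _ _
    have hTy' : ‖T y' - T y‖ ≤ ‖y' - y‖ := hT1 _ _
    have hyy'r : ‖y' - y‖ = ‖y - y'‖ := norm_sub_rev _ _
    -- denominator estimates
    have hdentri : ‖x' - y'‖ ≤ ‖x' - x‖ + ‖x - y‖ + ‖y - y'‖ := by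
      have := dist_triangle4 x' x y y'
      simpa [dist_eq_norm] using this
    have hdentri2 : ‖x - y‖ ≤ ‖x - x'‖ + ‖x' - y'‖ + ‖y' - y‖ := by
      have := dist_triangle4 x x' y' y
      simpa [dist_eq_norm] using this
    have hxx'r : ‖x' - x‖ = ‖x - x'‖ := norm_sub_rev _ _
    have hεd : ε * d < d := by nlinarith [mul_lt_mul_of_pos_right hεlt hd]
    have hdenpos : 0 < ‖x' - y'‖ := by
      rw [hδ0] at hxx' hyy'
      linarith [hdentri2]
    have hx'y' : x' ≠ y' := by
      intro h
      rw [h, sub_self, norm_zero] at hdenpos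
      exact lt_irrefl _ hdenpos
    set x'' : Xi j := ⟨x', hx'j⟩ with hx''
    set y'' : Xi j := ⟨y', hy'j⟩ with hy''
    have hne'' : x'' ≠ y'' := fun h => hx'y' (by injection h)
    -- S is 1-Lipschitz
    have hSlip : LipschitzWith 1 S := by
      refine LipschitzWith.of_dist_le_mul fun u v => ?_
      rw [dist_eq_norm, dist_eq_norm]
      simp only [NNReal.coe_one, one_mul, Submodule.coe_norm, AddSubgroupClass.coe_sub, hS]
      calc ‖P (T u) - P (T v)‖ = ‖P (T u - T v)‖ := by rw [map_sub]
      _ ≤ ‖T (u:X) - T (v:X)‖ := hPle _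
      _ ≤ ‖(u:X) - (v:X)‖ := hT1 _ _
    have hbddS : BddAbove (lipSet S) := lipSet_bddAbove hSlip
    have hlipSne : (lipSet S).Nonempty := ⟨_, x'', y'', hne'', rfl⟩
    -- lower estimate for the Lipschitz norm of S
    have hnorm1 : ‖S x'' - S y''‖ = ‖P (T x') - P (T y')‖ := by
      rw [Submodule.coe_norm]
      simp [hS, hx'', hy'']
    have hnorm2 : ‖x'' - y''‖ = ‖x' - y'‖ := by
      rw [Submodule.coe_norm]
      simp [hx'', hy'']
    have hnumlb : (1 - ε/4) * d - 6 * δ0 ≤ ‖P (T x') - P (T y')‖ := by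
      linarith [hPA, hABle, htri, hTx', hTy', hTxy, hxx', hyy', hw1n, hw2n, hyy'r]
    have hdenub : ‖x' - y'‖ ≤ d + 2 * δ0 := by
      linarith [hdentri, hxx', hyy', hxx'r]
    have hpoly : (1 - ε) * (d + 2 * δ0) ≤ (1 - ε/4) * d - 6 * δ0 := by
      rw [hδ0]
      nlinarith [mul_pos hεpos hd, mul_nonneg (mul_nonneg hεpos.le hεpos.le) hd.le]
    have helt : 1 - ε ≤ ‖S x'' - S y''‖ / ‖x'' - y''‖ := by
      rw [hnorm1, hnorm2, le_div_iff₀ hdenpos]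
      calc (1 - ε) * ‖x' - y'‖ ≤ (1 - ε) * (d + 2 * δ0) :=
        mul_le_mul_of_nonneg_left hdenub h1ε.le
      _ ≤ (1 - ε/4) * d - 6 * δ0 := hpoly
      _ ≤ ‖P (T x') - P (T y')‖ := hnumlb
    have hLge : 1 - ε ≤ LipNorm S :=
      helt.trans (le_csSup hbddS ⟨x'', y'', hne'', rfl⟩)
    have hLpos : 0 < LipNorm S := lt_of_lt_of_le h1ε hLge
    set L := LipNorm S with hL
    -- the normalized map
    set S' : Xi j → Xi j := fun v => L⁻¹ • S v with hS'
    have hLip'1 : LipNorm S' = 1 := by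
      rw [hS', lipNorm_smul (inv_pos.mpr hLpos) S hlipSne hbddS, ← hL,
        inv_mul_cancel₀ hLpos.ne']
    have hS0 : S 0 = 0 := by
      apply Subtype.ext
      simp [hS, hT0]
    have hIsLip0' : IsLip0 S' := by
      constructor
      · refine ⟨‖L⁻¹‖₊, LipschitzWith.of_dist_le_mul fun u v => ?_⟩
        have h7 : dist (S u) (S v) ≤ dist u v := by
          have := hSlip.dist_le_mul u v
          simpa using this
        calc dist (S' u) (S' v) = ‖L⁻¹‖ * dist (S u) (S v) := dist_smul₀ _ _ _
        _ ≤ ‖L⁻¹‖ * dist u v := mul_le_mul_of_nonneg_left h7 (norm_nonneg _)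
        _ = (‖L⁻¹‖₊ : ℝ) * dist u v := by rw [coe_nnnorm]
      · rw [hS']
        simp only [hS0, smul_zero]
    have hnuS' : nuL ℝ S' ≤ L⁻¹ * nuL ℝ S :=
      nuL_smul_le (inv_nonneg.mpr hLpos.le) (nuLSet_bddAbove hSlip)
    have hnuS : nuL ℝ S ≤ nuL ℝ T :=
      nuL_comp_proj_le (Xi j) P hPle hPmem hPfix T hbddT
    have hinv : L⁻¹ ≤ (1-ε)⁻¹ := by
      apply inv_anti₀ h1ε hLge
    calc nL ℝ (Xi j) ≤ nuL ℝ S' := nL_le hIsLip0' hLip'1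
    _ ≤ L⁻¹ * nuL ℝ S := hnuS'
    _ ≤ L⁻¹ * nuL ℝ T := mul_le_mul_of_nonneg_left hnuS (inv_nonneg.mpr hLpos.le)
    _ ≤ (1-ε)⁻¹ * nuL ℝ T := mul_le_mul_of_nonneg_right hinv hnuT
  have hcob : Filter.IsCoboundedUnder (· ≤ ·) Filter.atTop (fun i => nL ℝ (Xi i)) :=
    Filter.isCoboundedUnder_le_of_eventually_le Filter.atTop (x := 0)
      (Filter.Eventually.of_forall fun i => nL_nonneg _)
  refine (Filter.limsup_le_of_le hcob key).trans ?_
  have hεid : ε * (nuL ℝ T + 2*δ) = δ := by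
    rw [hε]; field_simp
  rw [inv_mul_le_iff₀ h1ε]
  nlinarith [mul_pos hεpos hδ, hεid]

end
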